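/- Let G_n be a family of simple graphs each containing a clique K_{n_c} with n_g gateway vertices (clique vertices with a neighbor outside the clique), and let x be a non-gateway clique vertex. If n_c − n_g → ∞, then for every fixed t ≥ 0, lim P_{G_n,t}^x(x) = 1. -/

import Mathlib

open Matrix Filter

/-- CTQW transition probability on a finite simple graph. -/
noncomputable def ctqwP {V : Type*} [Fintype V] [DecidableEq V]
    (G : SimpleGraph V) [DecidableRel G.Adj] (t : ℝ) (x y : V) : ℝ :=
  ‖(NormedSpace.exp ((Complex.I * t) • (G.lapMatrix ℂ))) x y‖ ^ 2

set_option linter.unusedSectionVars false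

section CtqwAux

open NormedSpace

variable {n : Type*} [Fintype n] [DecidableEq n]

lemma pow_mulVec_eigen (A : Matrix n n ℂ) (w : n → ℂ) (μ : ℂ)
    (h : A *ᵥ w = μ • w) : ∀ k : ℕ, (A ^ k) *ᵥ w = (μ ^ k) • w := by
  intro k
  induction k with
  | zero => simp
  | succ k ih =>
    rw [pow_succ, ← mulVec_mulVec, h, mulVec_smul, ih, smul_smul, ← pow_succ']

lemma exp_mulVec_eigen (A : Matrix n n ℂ) (w : n → ℂ) (μ : ℂ)
    (h : A *ᵥ w = μ • w) :
    NormedSpace.exp A *ᵥ w = NormedSpace.exp μ • w := by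
  letI : SeminormedRing (Matrix n n ℂ) := Matrix.linftyOpSemiNormedRing
  letI : NormedRing (Matrix n n ℂ) := Matrix.linftyOpNormedRing
  letI : NormedAlgebra ℂ (Matrix n n ℂ) := Matrix.linftyOpNormedAlgebra
  have hsum : Summable (fun k : ℕ => (k.factorial⁻¹ : ℂ) • A ^ k) := expSeries_summable' A
  let g : Matrix n n ℂ →ₗ[ℂ] (n → ℂ) :=
    { toFun := fun M => M *ᵥ w
      map_add' := fun M N => add_mulVec M N w
      map_smul' := fun c M => smul_mulVec c M w }
  have hg : Continuous g := g.continuous_of_finiteDimensional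
  have h1 : NormedSpace.exp A *ᵥ w = ∑' k : ℕ, (k.factorial⁻¹ : ℂ) • ((A ^ k) *ᵥ w) := by
    rw [exp_eq_tsum ℂ]
    have := ContinuousLinearMap.map_tsum (⟨g, hg⟩ : Matrix n n ℂ →L[ℂ] (n → ℂ)) hsum
    simpa [g, _root_.map_smul] using this
  rw [h1]
  have h2 : ∀ k : ℕ, (k.factorial⁻¹ : ℂ) • ((A ^ k) *ᵥ w)
      = ((k.factorial⁻¹ : ℂ) * μ ^ k) • w := by
    intro k
    rw [pow_mulVec_eigen A w μ h k, smul_smul]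
  simp_rw [h2]
  rw [Summable.tsum_smul_const]
  · congr 1
    rw [exp_eq_tsum ℂ]
    simp_rw [smul_eq_mul]
  · have := expSeries_summable' (𝕂 := ℂ) μ
    simpa [smul_eq_mul] using this

lemma exp_skew_unitary (A : Matrix n n ℂ) (hA : Aᴴ = -A) :
    (NormedSpace.exp A)ᴴ * NormedSpace.exp A = 1 := by
  rw [← Matrix.exp_conjTranspose, hA,
    ← Matrix.exp_add_of_commute (-A) A ((Commute.refl A).neg_left)]
  simp

lemma lap_herm (G : SimpleGraph n) [DecidableRel G.Adj] : (G.lapMatrix ℂ).IsHermitian := by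
  ext i j
  rw [conjTranspose_apply]
  simp only [SimpleGraph.lapMatrix, Matrix.sub_apply, SimpleGraph.degMatrix,
    Matrix.diagonal_apply, SimpleGraph.adjMatrix_apply, star_sub]
  by_cases h1 : j = i <;> by_cases h2 : G.Adj j i <;>
    simp [h1, h2, G.adj_comm i j, eq_comm, Ne.symm]
  · subst h1; rfl
  · subst h1; rfl

lemma dot_preserved (U : Matrix n n ℂ) (hU : Uᴴ * U = 1) (a b : n → ℂ) :
    star (U *ᵥ a) ⬝ᵥ (U *ᵥ b) = star a ⬝ᵥ b := by
  rw [star_mulVec, dotProduct_mulVec, vecMul_vecMul, hU, vecMul_one]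

noncomputable def nsq (f : n → ℂ) : ℝ := ∑ i, Complex.normSq (f i)

lemma star_dot_self (f : n → ℂ) : star f ⬝ᵥ f = ((nsq f : ℝ) : ℂ) := by
  simp [dotProduct, nsq, Complex.normSq_eq_conj_mul_self]

lemma nsq_preserved (U : Matrix n n ℂ) (hU : Uᴴ * U = 1) (f : n → ℂ) :
    nsq (U *ᵥ f) = nsq f := by
  have h := dot_preserved U hU f f
  rw [star_dot_self, star_dot_self] at h
  exact_mod_cast h

lemma entry_le_nsq (f : n → ℂ) (i : n) : ‖f i‖ ^ 2 ≤ nsq f := by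
  rw [Complex.sq_norm]
  exact Finset.single_le_sum (fun j _ => Complex.normSq_nonneg (f j)) (Finset.mem_univ i)

lemma nsq_single (x : n) : nsq (Pi.single x (1:ℂ)) = 1 := by
  simp [nsq, Pi.single_apply, apply_ite Complex.normSq]

lemma key_bound (G : SimpleGraph n) [DecidableRel G.Adj] (C : Set n)
    (hclique : G.IsClique C) (x : n) (hxC : x ∈ C)
    (hxng : ∀ w ∉ C, ¬ G.Adj x w) (t : ℝ) :
    1 - 2 * (((({v | v ∈ C ∧ ∀ w ∉ C, ¬ G.Adj v w}.ncard : ℝ))⁻¹)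
        + Real.sqrt ((({v | v ∈ C ∧ ∀ w ∉ C, ¬ G.Adj v w}.ncard : ℝ))⁻¹))
      ≤ ctqwP G t x x ∧ ctqwP G t x x ≤ 1 := by
  classical
  set S : Finset n := Finset.univ.filter (fun v => v ∈ C ∧ ∀ w ∉ C, ¬ G.Adj v w) with hS
  have hsetS : {v | v ∈ C ∧ ∀ w ∉ C, ¬ G.Adj v w} = ↑S := by
    ext v; simp [hS]
  rw [hsetS, Set.ncard_coe_finset]
  set k : ℕ := S.card with hk
  have hxS : x ∈ S := by
    simp only [hS, Finset.mem_filter]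
    exact ⟨Finset.mem_univ x, hxC, hxng⟩
  have hkpos : 0 < k := Finset.card_pos.mpr ⟨x, hxS⟩
  set CF : Finset n := Finset.univ.filter (· ∈ C) with hCF
  have hSsubCF : S ⊆ CF := fun v hv => by
    simp only [hS, Finset.mem_filter] at hv; simp [hCF, hv.2.1]
  have hxCF : x ∈ CF := hSsubCF hxS
  set c : ℕ := CF.card with hc
  have hcpos : 0 < c := Finset.card_pos.mpr ⟨x, hxCF⟩
  -- neighborhoods of non-gateway clique vertices
  have hnbr : ∀ y ∈ S, G.neighborFinset y = CF.erase y := by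
    intro y hy
    simp only [hS, Finset.mem_filter] at hy
    obtain ⟨-, hyC, hyng⟩ := hy
    ext z
    simp only [SimpleGraph.mem_neighborFinset, Finset.mem_erase, hCF, Finset.mem_filter,
      Finset.mem_univ, true_and]
    constructor
    · intro hadj
      by_cases hzC : z ∈ C
      · exact ⟨(G.ne_of_adj hadj).symm, hzC⟩
      · exact absurd hadj (hyng z hzC)
    · rintro ⟨hne, hzC⟩
      exact hclique hyC hzC (Ne.symm hne)
  have hdeg : ∀ y ∈ S, G.degree y = c - 1 := by
    intro y hy
    rw [← SimpleGraph.card_neighborFinset_eq_degree, hnbr y hy,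
      Finset.card_erase_of_mem (hSsubCF hy)]
  -- the vectors
  set ind : n → ℂ := fun i => if i ∈ S then 1 else 0 with hind
  set v : n → ℂ := (k : ℂ)⁻¹ • ind with hv
  set ex : n → ℂ := Pi.single x (1:ℂ) with hex
  set w : n → ℂ := ex - v with hw
  have hkC : ((k : ℂ)) ≠ 0 := Nat.cast_ne_zero.mpr hkpos.ne'
  have hwap : ∀ i, w i = (if i = x then 1 else 0) - (k : ℂ)⁻¹ * (if i ∈ S then 1 else 0) := by
    intro i; simp [hw, hv, hex, hind, Pi.single_apply]
  have hsum_w : ∀ s : Finset n, ∑ u ∈ s, w u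
      = (if x ∈ s then (1:ℂ) else 0) - (k : ℂ)⁻¹ * ((s ∩ S).card : ℂ) := by
    intro s
    simp only [hwap, Finset.sum_sub_distrib, Finset.sum_ite_eq' s x (fun _ => (1:ℂ)),
      ← Finset.mul_sum]
    congr 2
    rw [Finset.sum_boole, ← Finset.filter_mem_eq_inter]
  -- the eigenvector equation
  have heig : G.lapMatrix ℂ *ᵥ w = (c : ℂ) • w := by
    funext i
    rw [SimpleGraph.lapMatrix_mulVec_apply, Pi.smul_apply, smul_eq_mul]
    by_cases hiS : i ∈ S
    · have hdi : (G.degree i : ℂ) = (c : ℂ) - 1 := by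
        rw [hdeg i hiS]
        push_cast [Nat.cast_sub hcpos]
        ring
      rw [hnbr i hiS, hsum_w]
      have h1 : (CF.erase i ∩ S) = S.erase i := by
        ext u
        simp only [Finset.mem_inter, Finset.mem_erase]
        constructor
        · rintro ⟨⟨h1, -⟩, h2⟩; exact ⟨h1, h2⟩
        · rintro ⟨h1, h2⟩; exact ⟨⟨h1, hSsubCF h2⟩, h2⟩
      have h2 : ((CF.erase i ∩ S).card : ℂ) = (k : ℂ) - 1 := by
        rw [h1, Finset.card_erase_of_mem hiS]
        push_cast [Nat.cast_sub (show 1 ≤ S.card from hkpos)]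
        ring
      rw [h2, hdi, hwap i]
      by_cases hix : i = x
      · rw [if_pos hix, if_pos hiS,
          if_neg (show x ∉ CF.erase i by rw [hix]; exact Finset.notMem_erase x CF)]
        field_simp
        ring
      · rw [if_neg hix, if_pos hiS,
          if_pos (Finset.mem_erase.mpr ⟨fun h => hix h.symm, hxCF⟩)]
        field_simp
        ring
    · have hix : i ≠ x := fun h => hiS (h ▸ hxS)
      have hwi : w i = 0 := by rw [hwap i, if_neg hix, if_neg hiS]; ring
      rw [hwi, hsum_w]
      by_cases hiC : i ∈ C
      · have hxN : x ∈ G.neighborFinset i := by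
          rw [SimpleGraph.mem_neighborFinset]
          exact hclique hiC hxC hix
        have hNS : G.neighborFinset i ∩ S = S := by
          ext u
          simp only [Finset.mem_inter, SimpleGraph.mem_neighborFinset]
          refine ⟨fun h => h.2, fun hu => ⟨?_, hu⟩⟩
          have huC : u ∈ C := by
            simp only [hS, Finset.mem_filter] at hu; exact hu.2.1
          have hune : i ≠ u := fun h => hiS (h ▸ hu)
          exact hclique hiC huC hune
        rw [if_pos hxN, hNS]
        field_simp
        rw [← hk]; ring
      · have hxN : x ∉ G.neighborFinset i := by
          rw [SimpleGraph.mem_neighborFinset]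
          intro hadj
          exact hxng i hiC hadj.symm
        have hNS : G.neighborFinset i ∩ S = ∅ := by
          ext u
          simp only [Finset.mem_inter, SimpleGraph.mem_neighborFinset,
            Finset.notMem_empty, iff_false]
          rintro ⟨hadj, hu⟩
          simp only [hS, Finset.mem_filter] at hu
          exact hu.2.2 i hiC hadj.symm
        rw [if_neg hxN, hNS]
        simp
  -- the exponential
  set A : Matrix n n ℂ := (Complex.I * t) • G.lapMatrix ℂ with hA
  set U : Matrix n n ℂ := NormedSpace.exp A with hU
  set μ : ℂ := (Complex.I * t) * c with hμ
  have hAw : A *ᵥ w = μ • w := by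
    rw [hA, smul_mulVec, heig, smul_smul, hμ]
  have hstar : star (Complex.I * (t : ℂ)) = -(Complex.I * (t : ℂ)) := by
    simp [Complex.star_def, _root_.map_mul, Complex.conj_I, Complex.conj_ofReal]
  have hAskew : Aᴴ = -A := by
    rw [hA, conjTranspose_smul, lap_herm G, hstar, neg_smul]
  have hUU : Uᴴ * U = 1 := exp_skew_unitary A hAskew
  have hUw : U *ᵥ w = NormedSpace.exp μ • w := exp_mulVec_eigen A w μ hAw
  have hexpμ : ‖NormedSpace.exp μ‖ = 1 := by
    rw [← Complex.exp_eq_exp_ℂ, Complex.norm_exp]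
    have : μ.re = 0 := by
      simp [hμ, Complex.mul_re, Complex.mul_im]
    rw [this, Real.exp_zero]
  set amp : ℂ := U x x with hamp
  set r : ℂ := (U *ᵥ v) x with hr
  have hcol : (U *ᵥ ex) x = amp := by
    rw [hex, mulVec_single]
    simp [hamp]
  have hsplit : ex = w + v := by rw [hw, sub_add_cancel]
  have hampeq : amp = NormedSpace.exp μ * w x + r := by
    have h := congrFun (show U *ᵥ ex = NormedSpace.exp μ • w + U *ᵥ v by
      rw [hsplit, mulVec_add, hUw]) x
    rw [hcol] at h
    simpa using h
  -- norms
  have hnsqv : nsq v = (k : ℝ)⁻¹ := by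
    have h1 : ∀ i, Complex.normSq (v i) = if i ∈ S then (k:ℝ)⁻¹ * (k:ℝ)⁻¹ else 0 := by
      intro i
      by_cases hiS : i ∈ S <;>
        simp [hv, hind, hiS, ← Complex.ofReal_natCast, ← Complex.ofReal_inv,
          Complex.normSq_ofReal]
    rw [nsq]
    simp_rw [h1]
    rw [Finset.sum_ite_mem, Finset.univ_inter, Finset.sum_const, ← hk, nsmul_eq_mul]
    have hkR : (k : ℝ) ≠ 0 := Nat.cast_ne_zero.mpr hkpos.ne'
    field_simp
  have hkR1 : (1 : ℝ) ≤ (k : ℝ) := by exact_mod_cast hkpos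
  have hkinv_le : (k : ℝ)⁻¹ ≤ 1 := by
    rw [inv_le_one_iff₀]; right; exact hkR1
  have hkinv_nonneg : (0:ℝ) ≤ (k : ℝ)⁻¹ := inv_nonneg.mpr (Nat.cast_nonneg _)
  have hrle : ‖r‖ ≤ Real.sqrt (k:ℝ)⁻¹ := by
    have h1 : ‖r‖ ^ 2 ≤ (k:ℝ)⁻¹ := by
      calc ‖r‖ ^ 2 ≤ nsq (U *ᵥ v) := entry_le_nsq _ x
        _ = nsq v := nsq_preserved U hUU v
        _ = (k:ℝ)⁻¹ := hnsqv
    calc ‖r‖ = Real.sqrt (‖r‖ ^ 2) :=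
          (Real.sqrt_sq (norm_nonneg _)).symm
      _ ≤ Real.sqrt (k:ℝ)⁻¹ := Real.sqrt_le_sqrt h1
  have hampabs : ‖amp‖ ≤ 1 := by
    have h1 : ‖amp‖ ^ 2 ≤ 1 := by
      calc ‖amp‖ ^ 2 = ‖(U *ᵥ ex) x‖ ^ 2 := by rw [hcol]
        _ ≤ nsq (U *ᵥ ex) := entry_le_nsq _ x
        _ = nsq ex := nsq_preserved U hUU ex
        _ = 1 := nsq_single x
    nlinarith [norm_nonneg amp]
  have hwx : w x = ((1 - (k:ℝ)⁻¹ : ℝ) : ℂ) := by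
    rw [hwap x, if_pos rfl, if_pos hxS]
    push_cast
    ring
  have habsX : ‖NormedSpace.exp μ * w x‖ = 1 - (k:ℝ)⁻¹ := by
    rw [norm_mul, hexpμ, one_mul, hwx, Complex.norm_real, Real.norm_eq_abs,
      abs_of_nonneg (by linarith)]
  have hlower : 1 - (k:ℝ)⁻¹ - Real.sqrt (k:ℝ)⁻¹ ≤ ‖amp‖ := by
    have h1 : ‖NormedSpace.exp μ * w x‖ ≤ ‖amp‖ + ‖r‖ := by
      have hXa : NormedSpace.exp μ * w x = amp + (-r) := by rw [hampeq]; ring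
      calc ‖NormedSpace.exp μ * w x‖ = ‖amp + (-r)‖ := by rw [hXa]
        _ ≤ ‖amp‖ + ‖-r‖ := norm_add_le _ _
        _ = ‖amp‖ + ‖r‖ := by rw [norm_neg]
    rw [habsX] at h1
    linarith
  have hctqw : ctqwP G t x x = ‖amp‖ ^ 2 := rfl
  rw [hctqw]
  have hann : (0:ℝ) ≤ ‖amp‖ := norm_nonneg _
  have hsq : (0:ℝ) ≤ Real.sqrt (k:ℝ)⁻¹ := Real.sqrt_nonneg _
  constructor
  · nlinarith
  · nlinarith

end CtqwAux

/-- Growing clique causes strong localization: if `x m` is a non-gateway vertex of a clique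
`C m` in `G m` and the number `n_c − n_g` of non-gateway clique vertices tends to infinity,
then the CTQW return probability at `x m` tends to `1`. -/
theorem ctqw_strong_localization_clique
    (N : ℕ → ℕ) (G : (m : ℕ) → SimpleGraph (Fin (N m)))
    (hdec : ∀ m, DecidableRel (G m).Adj)
    (C : (m : ℕ) → Set (Fin (N m)))
    (hclique : ∀ m, (G m).IsClique (C m))
    (x : (m : ℕ) → Fin (N m))
    (hxC : ∀ m, x m ∈ C m)
    -- `x m` is a non-gateway clique vertex: no neighbor outside the clique
    (hxng : ∀ m, ∀ w ∉ C m, ¬ (G m).Adj (x m) w)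
    -- the number of non-gateway clique vertices `n_c − n_g` tends to infinity
    (hgrow : Tendsto
      (fun m => {v | v ∈ C m ∧ ∀ w ∉ C m, ¬ (G m).Adj v w}.ncard) atTop atTop)
    (t : ℝ) (ht : 0 ≤ t) :
    Tendsto (fun m => @ctqwP _ _ _ (G m) (hdec m) t (x m) (x m)) atTop (nhds 1) := by
  have key := fun m =>
    @key_bound _ _ _ (G m) (hdec m) (C m) (hclique m) (x m) (hxC m) (hxng m) t
  set K : ℕ → ℕ := fun m => {v | v ∈ C m ∧ ∀ w ∉ C m, ¬ (G m).Adj v w}.ncard with hKdef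
  have hK : Tendsto (fun m => ((K m : ℝ))⁻¹) atTop (nhds 0) :=
    tendsto_inv_atTop_zero.comp (tendsto_natCast_atTop_atTop.comp hgrow)
  have hsqrt : Tendsto (fun m => Real.sqrt (((K m : ℝ))⁻¹)) atTop (nhds 0) := by
    have h := hK.sqrt
    simpa using h
  have hlow : Tendsto (fun m => 1 - 2 * (((K m : ℝ))⁻¹ + Real.sqrt (((K m : ℝ))⁻¹)))
      atTop (nhds 1) := by
    have h := ((hK.add hsqrt).const_mul (2:ℝ)).const_sub (1:ℝ)
    simpa using h
  exact tendsto_of_tendsto_of_tendsto_of_le_of_le hlow tendsto_const_nhds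
    (fun m => (key m).1) (fun m => (key m).2)
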